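/- Let γ > 0, g, y ∈ ℝⁿ, z₀ ∈ X, and let z ∈ X satisfy γ(⟨g, z⟩ + ψ(z)) + ½‖z − z₀‖² ≤ γ(⟨g, u⟩ + ψ(u)) + ½‖u − z₀‖² for every u ∈ X. Set δ := g − ∇φ(y) and ℓ(u, v) := φ(v) + ⟨∇φ(v), u − v⟩. Then for every x ∈ X: γ·(ℓ(z, y) − ℓ(x, y) + ψ(z) − ψ(x)) ≤ ½‖z₀ − x‖² − ½‖z − x‖² − ½‖z₀ − z‖² − γ⟨δ, z − x⟩. -/
import Mathlib


open RealInnerProductSpace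

/-- Inexact proximal gradient step inequality: if `z` is the prox point of the linearized
objective at `y` with inexact gradient `g`, `δ = g − ∇φ(y)` and
`ℓ(u,v) = φ(v) + ⟨∇φ(v), u−v⟩`, then for every `x ∈ X`,
`γ(ℓ(z,y) − ℓ(x,y) + ψ(z) − ψ(x)) ≤ ½‖z₀−x‖² − ½‖z−x‖² − ½‖z₀−z‖² − γ⟨δ, z−x⟩`. -/
theorem inexact_prox_step {n : ℕ}
    (X : Set (EuclideanSpace ℝ (Fin n))) (hXne : X.Nonempty)
    (hXclosed : IsClosed X) (hXconv : Convex ℝ X)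
    (ψ : EuclideanSpace ℝ (Fin n) → ℝ) (hψ : ConvexOn ℝ Set.univ ψ)
    (φ : EuclideanSpace ℝ (Fin n) → ℝ)
    (φ' : EuclideanSpace ℝ (Fin n) → EuclideanSpace ℝ (Fin n))
    (hφgrad : ∀ x, HasGradientAt φ (φ' x) x)
    (γ : ℝ) (hγ : 0 < γ)
    (g y z₀ : EuclideanSpace ℝ (Fin n)) (hz₀ : z₀ ∈ X)
    (z : EuclideanSpace ℝ (Fin n)) (hzX : z ∈ X)
    (hprox : ∀ u ∈ X,
      γ * (⟪g, z⟫ + ψ z) + ‖z - z₀‖ ^ 2 / 2 ≤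
        γ * (⟪g, u⟫ + ψ u) + ‖u - z₀‖ ^ 2 / 2) :
    ∀ x ∈ X,
      γ * ((φ y + ⟪φ' y, z - y⟫) - (φ y + ⟪φ' y, x - y⟫) + ψ z - ψ x) ≤
        ‖z₀ - x‖ ^ 2 / 2 - ‖z - x‖ ^ 2 / 2 - ‖z₀ - z‖ ^ 2 / 2 -
        γ * ⟪g - φ' y, z - x⟫ := by
  intro x hx
  -- Step 1: strong-convexity-style inequality via the segment point
  have key : ∀ t : ℝ, 0 < t → t < 1 →
      γ * (⟪g, z⟫ + ψ z) + ‖z - z₀‖ ^ 2 / 2 + (1 - t) / 2 * ‖x - z‖ ^ 2 ≤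
        γ * (⟪g, x⟫ + ψ x) + ‖x - z₀‖ ^ 2 / 2 := by
    intro t ht0 ht1
    have ha : (0:ℝ) ≤ 1 - t := by linarith
    have hb : (0:ℝ) ≤ t := le_of_lt ht0
    have hab : (1 - t) + t = 1 := by ring
    set u : EuclideanSpace ℝ (Fin n) := (1 - t) • z + t • x with hu
    have huX : u ∈ X := hXconv hzX hx ha hb hab
    have hψu : ψ u ≤ (1 - t) * ψ z + t * ψ x :=
      hψ.2 (Set.mem_univ z) (Set.mem_univ x) ha hb hab
    have hp := hprox u huX
    have hginner : ⟪g, u⟫ = (1 - t) * ⟪g, z⟫ + t * ⟪g, x⟫ := by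
      simp [hu, inner_add_right, inner_smul_right]
    have hudiff : u - z₀ = (1 - t) • (z - z₀) + t • (x - z₀) := by
      rw [hu]
      module
    have hnormu : ‖u - z₀‖ ^ 2 =
        (1 - t) ^ 2 * ‖z - z₀‖ ^ 2 + 2 * ((1 - t) * t * ⟪z - z₀, x - z₀⟫)
          + t ^ 2 * ‖x - z₀‖ ^ 2 := by
      rw [hudiff, norm_add_sq_real, real_inner_smul_left, real_inner_smul_right,
        norm_smul, norm_smul]
      rw [Real.norm_eq_abs, Real.norm_eq_abs, abs_of_nonneg ha, abs_of_nonneg hb]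
      ring
    have hnormxz : ‖x - z‖ ^ 2 =
        ‖x - z₀‖ ^ 2 - 2 * ⟪z - z₀, x - z₀⟫ + ‖z - z₀‖ ^ 2 := by
      have : x - z = (x - z₀) - (z - z₀) := by abel
      rw [this, norm_sub_sq_real, real_inner_comm]
    have h1 : γ * (⟪g, u⟫ + ψ u) ≤
        (1 - t) * (γ * (⟪g, z⟫ + ψ z)) + t * (γ * (⟪g, x⟫ + ψ x)) := by
      rw [hginner]
      nlinarith [hψu]
    nlinarith [hp, h1, sq_nonneg (‖x - z‖), sq_nonneg t]
  -- Step 2: pass to the limit t → 0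
  have key2 : γ * (⟪g, z⟫ + ψ z) + ‖z - z₀‖ ^ 2 / 2 + ‖x - z‖ ^ 2 / 2 ≤
      γ * (⟪g, x⟫ + ψ x) + ‖x - z₀‖ ^ 2 / 2 := by
    refine le_of_forall_pos_le_add ?_
    intro ε hε
    set s := ‖x - z‖ ^ 2 with hs
    have hs0 : 0 ≤ s := sq_nonneg _
    set t : ℝ := min (2 * ε / (s + 1)) (1 / 2) with hts
    have ht0 : 0 < t := by
      apply lt_min
      · positivity
      · norm_num
    have ht1 : t < 1 := lt_of_le_of_lt (min_le_right _ _) (by norm_num)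
    have hkey := key t ht0 ht1
    have hineq : t * s / 2 ≤ ε := by
      have h1 : t ≤ 2 * ε / (s + 1) := min_le_left _ _
      have h2 : t * s ≤ (2 * ε / (s + 1)) * s := by
        apply mul_le_mul_of_nonneg_right h1 hs0
      have h3 : (2 * ε / (s + 1)) * s ≤ 2 * ε := by
        rw [div_mul_eq_mul_div, div_le_iff₀ (by linarith)]
        nlinarith
      linarith
    linarith [hkey]
  -- Step 3: rearrange inner products and norms
  have e1 : ⟪φ' y, z - y⟫ - ⟪φ' y, x - y⟫ = ⟪φ' y, z⟫ - ⟪φ' y, x⟫ := by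
    simp [inner_sub_right]
  have e2 : ⟪g - φ' y, z - x⟫ = ⟪g, z⟫ - ⟪g, x⟫ - ⟪φ' y, z⟫ + ⟪φ' y, x⟫ := by
    simp [inner_sub_left, inner_sub_right]; ring
  have e3 : ‖z₀ - x‖ = ‖x - z₀‖ := norm_sub_rev _ _
  have e4 : ‖z₀ - z‖ = ‖z - z₀‖ := norm_sub_rev _ _
  have e5 : ‖z - x‖ = ‖x - z‖ := norm_sub_rev _ _
  rw [e3, e4, e5, e2]
  have e6 : γ * ((φ y + ⟪φ' y, z - y⟫) - (φ y + ⟪φ' y, x - y⟫) + ψ z - ψ x)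
      = γ * (⟪φ' y, z⟫ - ⟪φ' y, x⟫ + ψ z - ψ x) := by
    rw [show (φ y + ⟪φ' y, z - y⟫) - (φ y + ⟪φ' y, x - y⟫)
        = ⟪φ' y, z - y⟫ - ⟪φ' y, x - y⟫ by ring, e1]
  rw [e6]
  nlinarith [key2]
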